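/- arXiv:0903.5065 — 2 statements merged into one kernel-verified Lean document; each statement's English description precedes it below -/
import Mathlib

section
/- With the Koszul bracket on 1-forms of a Poisson algebra A and anchor map π^♯: Ω¹_A → Der(A) determined by π^♯(df) = X_f, the anchor is a Lie algebra homomorphism: π^♯([α, β]) = [π^♯(α), π^♯(β)] for all 1-forms α, β. -/
/-!
STATEMENT 4: With the Koszul bracket on 1-forms of a Poisson algebra `A` and anchor map
`π^♯ : Ω¹_A → Der(A)` determined by `π^♯(f dg) = f X_g` (with `X_g = {g, ·}`), the anchor
is a Lie algebra homomorphism: `π^♯([α, β]) = [π^♯ α, π^♯ β]` (commutator of derivations)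
for all 1-forms `α, β`.
-/
theorem koszul_bracket_anchor_is_lie_hom
    (K : Type*) [Field K] [CharZero K] (A : Type*) [CommRing A] [Algebra K A]
    -- the Poisson bracket:
    (P : A →ₗ[K] A →ₗ[K] A)
    (P_antisymm : ∀ a b : A, P a b = - P b a)
    (P_jacobi : ∀ a b c : A, P a (P b c) = P (P a b) c + P b (P a c))
    (P_leibniz : ∀ a b c : A, P a (b * c) = P a b * c + b * P a c)
    -- the Koszul bracket on Kähler 1-forms, with its defining formula on generators:
    (br : KaehlerDifferential K A →+ KaehlerDifferential K A →+ KaehlerDifferential K A)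
    (hbr : ∀ f₁ g₁ f₂ g₂ : A,
      br (f₁ • KaehlerDifferential.D K A g₁) (f₂ • KaehlerDifferential.D K A g₂)
        = (f₁ * P g₁ f₂) • KaehlerDifferential.D K A g₂
          - (f₂ * P g₂ f₁) • KaehlerDifferential.D K A g₁
          + (f₁ * f₂) • KaehlerDifferential.D K A (P g₁ g₂))
    -- the anchor `π^♯`, an additive map to endomorphisms of `A` (derivations), with
    -- `π^♯(f dg) = f X_g`:
    (ρ : KaehlerDifferential K A →+ (A →+ A))
    (hρ : ∀ f g a : A, ρ (f • KaehlerDifferential.D K A g) a = f * P g a) :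
    -- the anchor is a homomorphism to the commutator bracket on derivations:
    ∀ α β : KaehlerDifferential K A,
      ρ (br α β) = (ρ α).comp (ρ β) - (ρ β).comp (ρ α) := by
  set S : Set (KaehlerDifferential K A) :=
    {y | ∃ f g : A, y = f • KaehlerDifferential.D K A g} with hS
  have hsmul : ∀ (a : A) (x : KaehlerDifferential K A),
      x ∈ AddSubmonoid.closure S → a • x ∈ AddSubmonoid.closure S := by
    intro a x hx
    induction hx using AddSubmonoid.closure_induction with
    | mem y hy =>
      obtain ⟨f, g, rfl⟩ := hy
      exact AddSubmonoid.subset_closure ⟨a * f, g, (mul_smul a f _).symm⟩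
    | zero => simpa using zero_mem _
    | add x y hx hy ihx ihy => rw [smul_add]; exact add_mem ihx ihy
  have hmem : ∀ x : KaehlerDifferential K A, x ∈ AddSubmonoid.closure S := by
    intro x
    have hx : x ∈ Submodule.span A (Set.range (KaehlerDifferential.D K A)) := by
      rw [KaehlerDifferential.span_range_derivation]; trivial
    induction hx using Submodule.span_induction with
    | mem y hy =>
      obtain ⟨g, rfl⟩ := hy
      exact AddSubmonoid.subset_closure ⟨1, g, (one_smul _ _).symm⟩
    | zero => exact zero_mem _
    | add x y _ _ ihx ihy => exact add_mem ihx ihy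
    | smul a x _ ihx => exact hsmul a x ihx
  intro α β
  induction hmem α using AddSubmonoid.closure_induction with
  | zero => simp
  | add x y hx hy ihx ihy =>
    rw [map_add, AddMonoidHom.add_apply, map_add, ihx, ihy]
    ext a
    simp [AddMonoidHom.sub_apply]
    abel
  | mem x hx =>
    obtain ⟨f₁, g₁, rfl⟩ := hx
    induction hmem β using AddSubmonoid.closure_induction with
    | zero => simp
    | add x y hx hy ihx ihy =>
      rw [map_add, map_add, ihx, ihy]
      ext a
      simp [AddMonoidHom.sub_apply, map_add]
      abel
    | mem y hy =>
      obtain ⟨f₂, g₂, rfl⟩ := hy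
      ext a
      rw [hbr, map_add, map_sub]
      simp only [AddMonoidHom.add_apply, AddMonoidHom.sub_apply, AddMonoidHom.comp_apply, hρ]
      rw [P_leibniz, P_leibniz, P_jacobi g₁ g₂ a]
      ring
end

section
/- The anchor-Leibniz rule holds for the Koszul bracket: for 1-forms α, β of a Poisson algebra A and f ∈ A, [α, f β] = (π^♯(α) f) β + f [α, β]. -/
/-!
STATEMENT 5: The anchor-Leibniz rule holds for the Koszul bracket: for Kähler 1-forms
`α, β` of a commutative Poisson algebra `A` and `f ∈ A`,
`[α, f β] = (π^♯(α) f) β + f [α, β]`.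
Here the Koszul bracket is determined by `[f₁ dg₁, f₂ dg₂] = f₁ X_{g₁}(f₂) dg₂ −
f₂ X_{g₂}(f₁) dg₁ + f₁f₂ d{g₁,g₂}` and the anchor by `π^♯(f dg) = f X_g`; this states that
`Ω¹_A` is a Lie–Rinehart algebra over `A`.
-/
theorem koszul_bracket_anchor_leibniz
    (K : Type*) [Field K] [CharZero K] (A : Type*) [CommRing A] [Algebra K A]
    -- the Poisson bracket:
    (P : A →ₗ[K] A →ₗ[K] A)
    (P_antisymm : ∀ a b : A, P a b = - P b a)
    (P_jacobi : ∀ a b c : A, P a (P b c) = P (P a b) c + P b (P a c))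
    (P_leibniz : ∀ a b c : A, P a (b * c) = P a b * c + b * P a c)
    -- the Koszul bracket on Kähler 1-forms, with its defining formula on generators:
    (br : KaehlerDifferential K A →+ KaehlerDifferential K A →+ KaehlerDifferential K A)
    (hbr : ∀ f₁ g₁ f₂ g₂ : A,
      br (f₁ • KaehlerDifferential.D K A g₁) (f₂ • KaehlerDifferential.D K A g₂)
        = (f₁ * P g₁ f₂) • KaehlerDifferential.D K A g₂
          - (f₂ * P g₂ f₁) • KaehlerDifferential.D K A g₁
          + (f₁ * f₂) • KaehlerDifferential.D K A (P g₁ g₂))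
    -- the anchor `π^♯` with `π^♯(f dg) = f X_g`:
    (ρ : KaehlerDifferential K A →+ (A →+ A))
    (hρ : ∀ f g a : A, ρ (f • KaehlerDifferential.D K A g) a = f * P g a) :
    -- the anchor-Leibniz rule:
    ∀ (α β : KaehlerDifferential K A) (f : A),
      br α (f • β) = (ρ α f) • β + f • br α β := by
  intro α β f
  have hP1 : ∀ x : A, P x 1 = 0 := by
    intro x
    have h := P_leibniz x 1 1
    rw [mul_one, mul_one, one_mul] at h
    exact right_eq_add.mp h
  -- Step 1: the rule holds when `α = a • D b` is a generator.
  have key : ∀ a b : A, ∀ β : KaehlerDifferential K A, ∀ f : A,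
      br (a • KaehlerDifferential.D K A b) (f • β)
        = (ρ (a • KaehlerDifferential.D K A b) f) • β
          + f • br (a • KaehlerDifferential.D K A b) β := by
    intro a b β
    have hβ : β ∈ Submodule.span A (Set.range (KaehlerDifferential.D K A)) := by
      rw [KaehlerDifferential.span_range_derivation]; trivial
    induction hβ using Submodule.span_induction with
    | mem x hx =>
      obtain ⟨g, rfl⟩ := hx
      intro f
      have h3 := hbr a b 1 g
      rw [one_smul] at h3
      rw [hbr a b f g, h3, hρ a b f, hP1]
      simp only [smul_sub, smul_add, smul_smul, one_mul, mul_one, mul_zero, zero_smul, zero_sub]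
      module
    | zero =>
      intro f
      simp
    | add x y hx hy ihx ihy =>
      intro f
      rw [smul_add, map_add, map_add, ihx f, ihy f]
      simp only [smul_add]
      abel
    | smul c x hx ih =>
      intro f
      rw [smul_smul, ih (f * c), ih c, hρ a b (f * c), hρ a b c, hρ a b f, P_leibniz b f c]
      simp only [smul_add, smul_smul, add_smul]
      module
  -- Step 2: extend to all α.
  have key2 : ∀ α : KaehlerDifferential K A, ∀ c : A, ∀ β : KaehlerDifferential K A, ∀ f : A,
      br (c • α) (f • β) = (ρ (c • α) f) • β + f • br (c • α) β := by
    intro α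
    have hα : α ∈ Submodule.span A (Set.range (KaehlerDifferential.D K A)) := by
      rw [KaehlerDifferential.span_range_derivation]; trivial
    induction hα using Submodule.span_induction with
    | mem x hx =>
      obtain ⟨g, rfl⟩ := hx
      intro c β f
      exact key c g β f
    | zero =>
      intro c β f
      simp
    | add x y hx hy ihx ihy =>
      intro c β f
      rw [smul_add, map_add, map_add]
      simp only [AddMonoidHom.add_apply]
      rw [ihx c β f, ihy c β f]
      simp only [add_smul, smul_add]
      abel
    | smul d x hx ih =>
      intro c β f
      rw [smul_smul]
      exact ih (c * d) β f
  have := key2 α 1 β f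
  rwa [one_smul] at this
end
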